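/- Let R be a commutative ring of characteristic 2 with a divided power ideal I such that γ_2 satisfies γ_2(ax) = a²γ_2(x) for a ∈ R, x ∈ I, and γ_2(xy) = 0 for x, y ∈ I. If m is a nilpotent ideal of R (say m^N = 0), then for every z in m·I, there exists r such that the r-fold iterate γ_2^r(z) = 0; i.e., γ_2 acts locally nilpotently on m·I. -/

import Mathlib

private lemma dpow_step {R : Type*} [CommRing R] {I : Ideal R} (hI : DividedPowers I)
    (m : Ideal R) (k : ℕ) :
    ∀ z ∈ m ^ k * I, hI.dpow 2 z ∈ m ^ (2 * k) * I := by
  intro z hz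
  have key : z ∈ m ^ k * I ∧ hI.dpow 2 z ∈ m ^ (2 * k) * I := by
    refine Submodule.mul_induction_on hz ?_ ?_
    · intro a ha b hb
      refine ⟨Ideal.mul_mem_mul ha hb, ?_⟩
      rw [hI.dpow_mul (n := 2) hb]
      have ha2 : a ^ 2 ∈ m ^ (2 * k) := by
        rw [mul_comm, pow_mul]
        exact Ideal.pow_mem_pow ha 2
      exact Ideal.mul_mem_mul ha2 (hI.dpow_mem (by norm_num) hb)
    · intro x y ⟨hx, hx2⟩ ⟨hy, hy2⟩
      have hxI : x ∈ I := Ideal.mul_le_right hx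
      have hyI : y ∈ I := Ideal.mul_le_right hy
      refine ⟨Ideal.add_mem _ hx hy, ?_⟩
      rw [hI.dpow_add' (n := 2) hxI hyI]
      rw [Finset.sum_range_succ, Finset.sum_range_succ, Finset.sum_range_one]
      simp only [hI.dpow_zero hxI, hI.dpow_zero hyI, hI.dpow_one hxI, hI.dpow_one hyI,
        one_mul, mul_one]
      have hcross : x * y ∈ m ^ (2 * k) * I := by
        have hle : (m ^ k * I) * (m ^ k * I) ≤ m ^ (2 * k) * I := by
          rw [mul_mul_mul_comm, ← pow_add, two_mul]
          exact Ideal.mul_mono_right Ideal.mul_le_left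
        exact hle (Ideal.mul_mem_mul hx hy)
      exact Ideal.add_mem _ (Ideal.add_mem _ hy2 hcross) hx2
  exact key.2

theorem stmt_4 {R : Type*} [CommRing R] [CharP R 2] {I : Ideal R}
    (hI : DividedPowers I)
    (hmul : ∀ x ∈ I, ∀ y ∈ I, hI.dpow 2 (x * y) = 0)
    (m : Ideal R) (N : ℕ) (hm : m ^ N = 0) :
    ∀ z ∈ m * I, ∃ r : ℕ, (fun w => hI.dpow 2 w)^[r] z = 0 := by
  intro z hz
  have hiter : ∀ r : ℕ, (fun w => hI.dpow 2 w)^[r] z ∈ m ^ (2 ^ r) * I := by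
    intro r
    induction r with
    | zero => simpa using hz
    | succ r ih =>
      rw [Function.iterate_succ_apply']
      have := dpow_step hI m (2 ^ r) _ ih
      rwa [← pow_succ'] at this
  refine ⟨N, ?_⟩
  have h1 : (fun w => hI.dpow 2 w)^[N] z ∈ m ^ (2 ^ N) := Ideal.mul_le_left (hiter N)
  have h2 : m ^ (2 ^ N) ≤ m ^ N := Ideal.pow_le_pow_right (Nat.le_of_lt (Nat.lt_two_pow_self (n := N)))
  have := h2 h1
  rw [hm] at this
  simpa using this
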